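/- For the Whittle–Matérn autocorrelation: with γ_Y(0) = (2λ)^{1−2ν}Γ(2ν−1) and ρ_Y(h) = (2^{3/2−ν}/Γ(ν−1/2))·|λh|^{ν−1/2}·K_{ν−1/2}(|λh|), the structure function S₂(Δ) = 2γ_Y(0)(1 − ρ_Y(Δ)) satisfies, for 1/2 < ν < 3/2: S₂(Δ)/(2γ_Y(0)) = 2^{1−2ν}·(Γ(3/2−ν)/Γ(ν+1/2))·(λΔ)^{2ν−1} + O(Δ²) as Δ → 0+. -/

import Mathlib

open Filter Set MeasureTheory

/-- Modified Bessel function of the second kind `K_μ(x)` (for `x > 0`),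
via the integral representation `K_μ(x) = ∫_0^∞ exp(-x cosh t) cosh(μ t) dt`. -/
noncomputable def besselK (μ x : ℝ) : ℝ :=
  ∫ t in Set.Ioi (0 : ℝ), Real.exp (-x * Real.cosh t) * Real.cosh (μ * t)

section helpers
open Real Topology

lemma int_Ioc_rpow {r : ℝ} (hr : -1 < r) : IntegrableOn (fun s : ℝ => s ^ r) (Ioc (0:ℝ) 1) :=
  (intervalIntegral.intervalIntegrable_rpow' hr).1

lemma integrableOn_of_bound {f g : ℝ → ℝ} {s : Set ℝ} (hs : MeasurableSet s)
    (hg : IntegrableOn g s) (hf : AEStronglyMeasurable f (volume.restrict s))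
    (h : ∀ x ∈ s, |f x| ≤ g x) : IntegrableOn f s := by
  refine hg.mono' hf ?_
  rw [ae_restrict_iff' hs]
  exact ae_of_all _ fun x hx => by simpa [Real.norm_eq_abs] using h x hx

lemma exp_neg_sub_one_abs_le_one {t : ℝ} (ht : 0 ≤ t) : |Real.exp (-t) - 1| ≤ 1 := by
  have h1 : Real.exp (-t) ≤ 1 := Real.exp_le_one_iff.mpr (by linarith)
  have h2 : 0 < Real.exp (-t) := Real.exp_pos _
  rw [abs_of_nonpos (by linarith)]; linarith

lemma exp_neg_sub_one_abs_le {t : ℝ} (ht : 0 ≤ t) : |Real.exp (-t) - 1| ≤ t := by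
  have h1 : Real.exp (-t) ≤ 1 := Real.exp_le_one_iff.mpr (by linarith)
  have h2 : 1 - t ≤ Real.exp (-t) := by
    have := Real.add_one_le_exp (-t); linarith
  rw [abs_of_nonpos (by linarith)]; linarith

lemma integral_Ioc_rpow {r : ℝ} (hr : -1 < r) : ∫ s in Ioc (0:ℝ) 1, s ^ r = 1/(r+1) := by
  rw [← intervalIntegral.integral_of_le zero_le_one, integral_rpow (Or.inl hr)]
  rw [Real.one_rpow, Real.zero_rpow (by linarith)]; ring

lemma J_meas (μ : ℝ) : Measurable (fun w : ℝ => w ^ (-μ-1) * (Real.exp (-w) - 1)) := by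
  fun_prop

lemma integrable_J {μ : ℝ} (hμ0 : 0 < μ) (hμ1 : μ < 1) :
    IntegrableOn (fun w : ℝ => w ^ (-μ-1) * (Real.exp (-w) - 1)) (Ioi 0) := by
  have h1 : IntegrableOn (fun w : ℝ => w ^ (-μ-1) * (Real.exp (-w) - 1)) (Ioc 0 1) := by
    refine integrableOn_of_bound measurableSet_Ioc (int_Ioc_rpow (r := -μ) (by linarith))
      ((J_meas μ).aestronglyMeasurable.restrict) (fun w hw => ?_)
    obtain ⟨hw0, hw1⟩ := hw
    rw [abs_mul, abs_of_nonneg (Real.rpow_nonneg hw0.le _)]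
    calc w ^ (-μ-1) * |Real.exp (-w) - 1| ≤ w ^ (-μ-1) * w :=
          mul_le_mul_of_nonneg_left (exp_neg_sub_one_abs_le hw0.le) (Real.rpow_nonneg hw0.le _)
      _ = w ^ (-μ-1+1) := by rw [Real.rpow_add_one hw0.ne']
      _ = w ^ (-μ) := by norm_num
  have h2 : IntegrableOn (fun w : ℝ => w ^ (-μ-1) * (Real.exp (-w) - 1)) (Ioi 1) := by
    refine integrableOn_of_bound measurableSet_Ioi
      (integrableOn_Ioi_rpow_of_lt (a := -μ-1) (by linarith) one_pos)
      ((J_meas μ).aestronglyMeasurable.restrict) (fun w hw => ?_)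
    have hw0 : (0:ℝ) < w := lt_trans one_pos hw
    rw [abs_mul, abs_of_nonneg (Real.rpow_nonneg hw0.le _)]
    calc w ^ (-μ-1) * |Real.exp (-w) - 1| ≤ w ^ (-μ-1) * 1 :=
          mul_le_mul_of_nonneg_left (exp_neg_sub_one_abs_le_one hw0.le) (Real.rpow_nonneg hw0.le _)
      _ = w ^ (-μ-1) := mul_one _
  have := h1.union h2
  rwa [Ioc_union_Ioi_eq_Ioi zero_le_one] at this

lemma integral_J {μ : ℝ} (hμ0 : 0 < μ) (hμ1 : μ < 1) :
    ∫ w in Ioi (0:ℝ), w ^ (-μ-1) * (Real.exp (-w) - 1) = Real.Gamma (-μ) := by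
  set F : ℝ → ℝ := fun w => -(1/μ) * (w ^ (-μ) * (Real.exp (-w) - 1)) with hF
  have hG : IntegrableOn (fun w : ℝ => Real.exp (-w) * w ^ (-μ)) (Ioi 0) := by
    have := Real.GammaIntegral_convergent (show (0:ℝ) < 1 - μ by linarith)
    convert this using 2 with w
    norm_num
  have hderiv : ∀ w ∈ Ioi (0:ℝ), HasDerivAt F
      (w ^ (-μ-1) * (Real.exp (-w) - 1) + (1/μ) * (Real.exp (-w) * w ^ (-μ))) w := by
    intro w hw
    have h1 : HasDerivAt (fun w : ℝ => w ^ (-μ)) (-μ * w ^ (-μ-1)) w :=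
      Real.hasDerivAt_rpow_const (Or.inl (ne_of_gt hw))
    have h2 : HasDerivAt (fun w : ℝ => Real.exp (-w) - 1) (Real.exp (-w) * (-1)) w :=
      ((Real.hasDerivAt_exp (-w)).comp w (hasDerivAt_neg w)).sub_const 1
    have := (h1.mul h2).const_mul (-(1/μ))
    convert this using 1
    all_goals first | rfl | (field_simp; ring)
  have hcont : ContinuousWithinAt F (Ici 0) 0 := by
    rw [ContinuousWithinAt]
    have hF0 : F 0 = 0 := by simp [hF]
    rw [hF0]
    have hbound : ∀ᶠ w in 𝓝[Ici (0:ℝ)] 0, ‖F w‖ ≤ (1/μ) * w ^ (1-μ) := by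
      filter_upwards [self_mem_nhdsWithin] with w (hw : 0 ≤ w)
      rcases eq_or_lt_of_le hw with rfl | hw0
      · simp [hF, Real.zero_rpow (by linarith : (1:ℝ)-μ ≠ 0)]
      · rw [hF, Real.norm_eq_abs, abs_mul, abs_mul, abs_of_nonneg (Real.rpow_nonneg hw _)]
        have : |(-(1/μ))| = 1/μ := by rw [abs_neg, abs_of_pos (by positivity)]
        rw [this]
        refine mul_le_mul_of_nonneg_left ?_ (by positivity)
        calc w ^ (-μ) * |Real.exp (-w) - 1| ≤ w ^ (-μ) * w :=
              mul_le_mul_of_nonneg_left (exp_neg_sub_one_abs_le hw) (Real.rpow_nonneg hw _)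
          _ = w ^ (-μ+1) := by rw [Real.rpow_add_one hw0.ne']
          _ = w ^ (1-μ) := by rw [show -μ+1 = 1-μ by ring]
    have hlim : Tendsto (fun w : ℝ => (1/μ) * w ^ (1-μ)) (𝓝[Ici (0:ℝ)] 0) (𝓝 0) := by
      have h := (Real.continuousAt_rpow_const 0 (1-μ) (Or.inr (by linarith))).tendsto
      rw [Real.zero_rpow (by linarith : (1:ℝ)-μ ≠ 0)] at h
      have := (h.const_mul (1/μ)).mono_left (nhdsWithin_le_nhds (s := Ici (0:ℝ)))
      simpa using this
    exact squeeze_zero_norm' hbound hlim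
  have htop : Tendsto F atTop (𝓝 0) := by
    have h1 : Tendsto (fun w : ℝ => w ^ (-μ)) atTop (𝓝 0) := tendsto_rpow_neg_atTop hμ0
    have h2 : Tendsto (fun w : ℝ => Real.exp (-w) - 1) atTop (𝓝 (0 - 1)) := by
      refine Tendsto.sub_const ?_ 1
      exact Real.tendsto_exp_atBot.comp tendsto_neg_atTop_atBot
    have h3 := (h1.mul h2).const_mul (-(1/μ))
    rw [show (-(1/μ) * (0 * (0-1)) : ℝ) = 0 by ring] at h3
    exact h3
  have hint : IntegrableOn (fun w : ℝ =>
      w ^ (-μ-1) * (Real.exp (-w) - 1) + (1/μ) * (Real.exp (-w) * w ^ (-μ))) (Ioi 0) :=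
    (integrable_J hμ0 hμ1).add (hG.const_mul _)
  have key := integral_Ioi_of_hasDerivAt_of_tendsto hcont hderiv hint htop
  have hF0 : F 0 = 0 := by simp [hF]
  rw [hF0, sub_zero] at key
  rw [integral_add (integrable_J hμ0 hμ1) (hG.const_mul _), integral_const_mul] at key
  have hGval : ∫ w in Ioi (0:ℝ), Real.exp (-w) * w ^ (-μ) = Real.Gamma (1-μ) := by
    rw [Real.Gamma_eq_integral (by linarith : (0:ℝ) < 1 - μ)]
    congr 1 with w
    norm_num
  rw [hGval] at key
  have hrec : Real.Gamma (1-μ) = -μ * Real.Gamma (-μ) := by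
    have := Real.Gamma_add_one (show -μ ≠ 0 by linarith)
    rw [show -μ + 1 = 1 - μ by ring] at this
    exact this
  rw [hrec] at key
  rw [show (1/μ) * (-μ * Real.Gamma (-μ)) = -Real.Gamma (-μ) by field_simp] at key
  linarith

lemma f2_meas (μ y : ℝ) : Measurable (fun s : ℝ => s ^ (μ-1) * (Real.exp (-(y/s)) - 1)) := by
  fun_prop

lemma integrable_f2 {μ y : ℝ} (hμ0 : 0 < μ) (hμ1 : μ < 1) (hy : 0 < y) :
    IntegrableOn (fun s : ℝ => s ^ (μ-1) * (Real.exp (-(y/s)) - 1)) (Ioi 0) := by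
  have h1 : IntegrableOn (fun s : ℝ => s ^ (μ-1) * (Real.exp (-(y/s)) - 1)) (Ioc 0 1) := by
    refine integrableOn_of_bound measurableSet_Ioc (int_Ioc_rpow (r := μ-1) (by linarith))
      ((f2_meas μ y).aestronglyMeasurable.restrict) (fun s hs => ?_)
    obtain ⟨hs0, hs1⟩ := hs
    rw [abs_mul, abs_of_nonneg (Real.rpow_nonneg hs0.le _)]
    have := exp_neg_sub_one_abs_le_one (t := y/s) (by positivity)
    calc s ^ (μ-1) * |Real.exp (-(y/s)) - 1| ≤ s ^ (μ-1) * 1 :=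
          mul_le_mul_of_nonneg_left this (Real.rpow_nonneg hs0.le _)
      _ = s ^ (μ-1) := mul_one _
  have h2 : IntegrableOn (fun s : ℝ => s ^ (μ-1) * (Real.exp (-(y/s)) - 1)) (Ioi 1) := by
    refine integrableOn_of_bound measurableSet_Ioi
      ((integrableOn_Ioi_rpow_of_lt (a := μ-2) (by linarith) one_pos).const_mul y)
      ((f2_meas μ y).aestronglyMeasurable.restrict) (fun s hs => ?_)
    have hs0 : (0:ℝ) < s := lt_trans one_pos hs
    rw [abs_mul, abs_of_nonneg (Real.rpow_nonneg hs0.le _)]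
    have := exp_neg_sub_one_abs_le (t := y/s) (by positivity)
    calc s ^ (μ-1) * |Real.exp (-(y/s)) - 1| ≤ s ^ (μ-1) * (y/s) :=
          mul_le_mul_of_nonneg_left this (Real.rpow_nonneg hs0.le _)
      _ = y * (s ^ (μ-1) * s⁻¹) := by ring
      _ = y * s ^ (μ-2) := by
          rw [← Real.rpow_neg_one s, ← Real.rpow_add hs0, show μ-1 + -1 = μ-2 by ring]
  have := h1.union h2
  rwa [Ioc_union_Ioi_eq_Ioi zero_le_one] at this

lemma integral_f2 {μ y : ℝ} (hμ0 : 0 < μ) (hμ1 : μ < 1) (hy : 0 < y) :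
    ∫ s in Ioi (0:ℝ), s ^ (μ-1) * (Real.exp (-(y/s)) - 1) = Real.Gamma (-μ) * y ^ μ := by
  have step1 := integral_comp_rpow_Ioi
    (fun s : ℝ => s ^ (μ-1) * (Real.exp (-(y/s)) - 1)) (p := -1) (by norm_num)
  rw [← step1]
  have e1 : EqOn (fun x : ℝ =>
      (|(-1:ℝ)| * x ^ ((-1:ℝ) - 1)) • ((x ^ (-1:ℝ)) ^ (μ-1) * (Real.exp (-(y/(x ^ (-1:ℝ)))) - 1)))
      (fun x : ℝ => y ^ (μ+1) * ((y*x) ^ (-μ-1) * (Real.exp (-(y*x)) - 1))) (Ioi 0) := by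
    intro x hx
    have hx0 : (0:ℝ) < x := hx
    have l1 : (x⁻¹) ^ (μ-1) = x ^ (1-μ) := by
      rw [Real.inv_rpow hx0.le, ← Real.rpow_neg hx0.le, show -(μ-1) = 1-μ by ring]
    have l2 : (y*x) ^ (-μ-1) = y ^ (-μ-1) * x ^ (-μ-1) := Real.mul_rpow hy.le hx0.le
    have l3 : y ^ (μ+1) * y ^ (-μ-1) = 1 := by
      rw [← Real.rpow_add hy, show μ+1 + (-μ-1) = 0 by ring, Real.rpow_zero]
    have l4 : x ^ ((-1:ℝ)-1) * x ^ (1-μ) = x ^ (-μ-1) := by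
      rw [← Real.rpow_add hx0, show (-1:ℝ)-1 + (1-μ) = -μ-1 by ring]
    simp only [smul_eq_mul, abs_neg, abs_one, one_mul, Real.rpow_neg_one, div_eq_mul_inv, inv_inv, l1, l2]
    calc x ^ ((-1:ℝ)-1) * (x ^ (1-μ) * (Real.exp (-(y*x)) - 1))
        = (y ^ (μ+1) * y ^ (-μ-1)) * ((x ^ ((-1:ℝ)-1) * x ^ (1-μ)) * (Real.exp (-(y*x)) - 1)) := by
          rw [l3]; ring
      _ = y ^ (μ+1) * (y ^ (-μ-1) * x ^ (-μ-1) * (Real.exp (-(y*x)) - 1)) := by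
          rw [l4]; ring
  rw [setIntegral_congr_fun measurableSet_Ioi e1, integral_const_mul]
  have step2 := integral_comp_mul_left_Ioi (fun w : ℝ => w ^ (-μ-1) * (Real.exp (-w) - 1)) 0 hy
  rw [mul_zero, smul_eq_mul, integral_J hμ0 hμ1] at step2
  rw [step2]
  have l5 : y ^ (μ+1) * y⁻¹ = y ^ μ := by
    rw [← Real.rpow_neg_one y, ← Real.rpow_add hy, show μ+1 + (-1) = μ by ring]
  calc y ^ (μ+1) * (y⁻¹ * Real.Gamma (-μ)) = (y ^ (μ+1) * y⁻¹) * Real.Gamma (-μ) := by ring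
    _ = Real.Gamma (-μ) * y ^ μ := by rw [l5]; ring

lemma f3_bound_Ioc {μ y : ℝ} (hμ0 : 0 < μ) (hy : 0 < y) :
    ∀ s ∈ Ioc (0:ℝ) 1,
      |(Real.exp (-s) - 1) * (s ^ (μ-1) * (Real.exp (-(y/s)) - 1))| ≤ y * s ^ (μ-1) := by
  intro s hs
  obtain ⟨hs0, hs1⟩ := hs
  rw [abs_mul, abs_mul, abs_of_nonneg (Real.rpow_nonneg hs0.le _)]
  have h1 := exp_neg_sub_one_abs_le hs0.le
  have h2 := exp_neg_sub_one_abs_le (t := y/s) (by positivity)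
  calc |Real.exp (-s) - 1| * (s ^ (μ-1) * |Real.exp (-(y/s)) - 1|)
      ≤ s * (s ^ (μ-1) * (y/s)) := by
        apply mul_le_mul h1 (mul_le_mul_of_nonneg_left h2 (Real.rpow_nonneg hs0.le _))
          (mul_nonneg (Real.rpow_nonneg hs0.le _) (abs_nonneg _)) hs0.le
    _ = y * s ^ (μ-1) := by field_simp
lemma f3_bound_Ioi {μ y : ℝ} (hμ0 : 0 < μ) (hy : 0 < y) :
    ∀ s ∈ Ioi (1:ℝ),
      |(Real.exp (-s) - 1) * (s ^ (μ-1) * (Real.exp (-(y/s)) - 1))| ≤ y * s ^ (μ-2) := by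
  intro s hs
  have hs0 : (0:ℝ) < s := lt_trans one_pos hs
  rw [abs_mul, abs_mul, abs_of_nonneg (Real.rpow_nonneg hs0.le _)]
  have h1 := exp_neg_sub_one_abs_le_one hs0.le
  have h2 := exp_neg_sub_one_abs_le (t := y/s) (by positivity)
  calc |Real.exp (-s) - 1| * (s ^ (μ-1) * |Real.exp (-(y/s)) - 1|)
      ≤ 1 * (s ^ (μ-1) * (y/s)) := by
        apply mul_le_mul h1 (mul_le_mul_of_nonneg_left h2 (Real.rpow_nonneg hs0.le _))
          (mul_nonneg (Real.rpow_nonneg hs0.le _) (abs_nonneg _)) zero_le_one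
    _ = y * (s ^ (μ-1) * s⁻¹) := by ring
    _ = y * s ^ (μ-2) := by
        rw [← Real.rpow_neg_one s, ← Real.rpow_add hs0, show μ-1 + -1 = μ-2 by ring]

lemma core_est {μ y : ℝ} (hμ0 : 0 < μ) (hμ1 : μ < 1) (hy : 0 < y) :
    |(∫ s in Ioi (0:ℝ), Real.exp (-s) * s ^ (μ-1) * Real.exp (-(y/s))) - Real.Gamma μ -
      Real.Gamma (-μ) * y ^ μ| ≤ (1/μ + 1/(1-μ)) * y := by
  set f3 : ℝ → ℝ := fun s => (Real.exp (-s) - 1) * (s ^ (μ-1) * (Real.exp (-(y/s)) - 1)) with hf3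
  have f3meas : Measurable f3 := by fun_prop
  have intf3_Ioc : IntegrableOn f3 (Ioc 0 1) :=
    integrableOn_of_bound measurableSet_Ioc ((int_Ioc_rpow (r := μ-1) (by linarith)).const_mul y)
      (f3meas.aestronglyMeasurable.restrict) (f3_bound_Ioc hμ0 hy)
  have intf3_Ioi : IntegrableOn f3 (Ioi 1) :=
    integrableOn_of_bound measurableSet_Ioi
      ((integrableOn_Ioi_rpow_of_lt (a := μ-2) (by linarith) one_pos).const_mul y)
      (f3meas.aestronglyMeasurable.restrict) (f3_bound_Ioi hμ0 hy)
  have intf3 : IntegrableOn f3 (Ioi 0) := by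
    have := intf3_Ioc.union intf3_Ioi
    rwa [Ioc_union_Ioi_eq_Ioi zero_le_one] at this
  have intf1 : IntegrableOn (fun s : ℝ => Real.exp (-s) * s ^ (μ-1)) (Ioi 0) :=
    Real.GammaIntegral_convergent hμ0
  have intf2 := integrable_f2 hμ0 hμ1 hy
  have I_eq : EqOn (fun s : ℝ => Real.exp (-s) * s ^ (μ-1) * Real.exp (-(y/s)))
      (fun s : ℝ => (Real.exp (-s) * s ^ (μ-1) + s ^ (μ-1) * (Real.exp (-(y/s)) - 1)) + f3 s)
      (Ioi 0) := by
    intro s _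
    simp only [hf3]
    ring
  have intf12 : IntegrableOn (fun s : ℝ => Real.exp (-s) * s ^ (μ-1) +
      s ^ (μ-1) * (Real.exp (-(y/s)) - 1)) (Ioi 0) := intf1.add intf2
  rw [setIntegral_congr_fun measurableSet_Ioi I_eq,
    integral_add intf12 intf3, integral_add intf1 intf2,
    ← Real.Gamma_eq_integral hμ0, integral_f2 hμ0 hμ1 hy]
  have habs : |Real.Gamma μ + Real.Gamma (-μ) * y ^ μ + (∫ s in Ioi (0:ℝ), f3 s) - Real.Gamma μ -
      Real.Gamma (-μ) * y ^ μ| = |∫ s in Ioi (0:ℝ), f3 s| := by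
    congr 1; ring
  rw [habs]
  have h1 : |∫ s in Ioi (0:ℝ), f3 s| ≤ ∫ s in Ioi (0:ℝ), |f3 s| := by
    simpa [Real.norm_eq_abs] using norm_integral_le_integral_norm (μ := volume.restrict (Ioi 0)) f3
  have hsplit : (∫ s in Ioi (0:ℝ), |f3 s|) =
      (∫ s in Ioc (0:ℝ) 1, |f3 s|) + ∫ s in Ioi (1:ℝ), |f3 s| := by
    rw [← Ioc_union_Ioi_eq_Ioi (zero_le_one (α := ℝ))]
    exact setIntegral_union (Ioc_disjoint_Ioi le_rfl) measurableSet_Ioi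
      intf3_Ioc.abs intf3_Ioi.abs
  have h2 : (∫ s in Ioc (0:ℝ) 1, |f3 s|) ≤ y * (1/μ) := by
    calc (∫ s in Ioc (0:ℝ) 1, |f3 s|) ≤ ∫ s in Ioc (0:ℝ) 1, y * s ^ (μ-1) :=
          setIntegral_mono_on intf3_Ioc.abs
            ((int_Ioc_rpow (r := μ-1) (by linarith)).const_mul y) measurableSet_Ioc
            (f3_bound_Ioc hμ0 hy)
      _ = y * (1/μ) := by
          rw [integral_const_mul, integral_Ioc_rpow (by linarith), show μ-1+1 = μ by ring]
  have h3 : (∫ s in Ioi (1:ℝ), |f3 s|) ≤ y * (1/(1-μ)) := by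
    calc (∫ s in Ioi (1:ℝ), |f3 s|) ≤ ∫ s in Ioi (1:ℝ), y * s ^ (μ-2) :=
          setIntegral_mono_on intf3_Ioi.abs
            ((integrableOn_Ioi_rpow_of_lt (a := μ-2) (by linarith) one_pos).const_mul y)
            measurableSet_Ioi (f3_bound_Ioi hμ0 hy)
      _ = y * (1/(1-μ)) := by
          rw [integral_const_mul, integral_Ioi_rpow_of_lt (by linarith) one_pos]
          rw [Real.one_rpow]
          congr 1
          rw [show μ-2+1 = -(1-μ) by ring, div_neg, neg_div, neg_neg]
  calc |∫ s in Ioi (0:ℝ), f3 s| ≤ ∫ s in Ioi (0:ℝ), |f3 s| := h1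
    _ = (∫ s in Ioc (0:ℝ) 1, |f3 s|) + ∫ s in Ioi (1:ℝ), |f3 s| := hsplit
    _ ≤ y * (1/μ) + y * (1/(1-μ)) := add_le_add h2 h3
    _ = (1/μ + 1/(1-μ)) * y := by ring

lemma image_exp_Ioi : Real.exp '' Ioi (0:ℝ) = Ioi 1 := by
  ext v
  constructor
  · rintro ⟨t, ht, rfl⟩
    rw [mem_Ioi, ← Real.exp_zero]
    exact Real.exp_lt_exp.mpr ht
  · intro hv
    exact ⟨Real.log v, Real.log_pos hv, Real.exp_log (by linarith [mem_Ioi.mp hv])⟩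

lemma image_inv_Ioc : (fun u : ℝ => u⁻¹) '' Ioc (0:ℝ) 1 = Ici 1 := by
  ext v
  constructor
  · rintro ⟨u, ⟨hu0, hu1⟩, rfl⟩
    rw [mem_Ici]
    nlinarith [mul_inv_cancel₀ (ne_of_gt hu0), inv_pos.mpr hu0]
  · intro hv
    rw [mem_Ici] at hv
    have hv0 : (0:ℝ) < v := by linarith
    refine ⟨v⁻¹, ⟨inv_pos.mpr hv0, ?_⟩, inv_inv v⟩
    nlinarith [mul_inv_cancel₀ (ne_of_gt hv0), inv_pos.mpr hv0]

lemma besselK_u {μ x : ℝ} (hx : 0 < x) :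
    besselK μ x = ∫ u in Ioi (1:ℝ),
      Real.exp (-(x*(u+u⁻¹)/2)) * ((u ^ μ + u ^ (-μ)) / (2*u)) := by
  have key := integral_image_eq_integral_abs_deriv_smul measurableSet_Ioi
    (fun t (_ : t ∈ Ioi (0:ℝ)) => (Real.hasDerivAt_exp t).hasDerivWithinAt)
    (Real.exp_injective.injOn)
    (fun u : ℝ => Real.exp (-(x*(u+u⁻¹)/2)) * ((u ^ μ + u ^ (-μ)) / (2*u)))
  rw [_root_.image_exp_Ioi] at key
  rw [key]
  unfold besselK
  apply setIntegral_congr_fun measurableSet_Ioi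
  intro t _
  have het := Real.exp_pos t
  have h1 : Real.exp (-x * Real.cosh t) =
      Real.exp (-(x * (Real.exp t + (Real.exp t)⁻¹)/2)) := by
    rw [Real.cosh_eq, Real.exp_neg]
    congr 1
    ring
  have h2 : Real.cosh (μ*t) = ((Real.exp t) ^ μ + (Real.exp t) ^ (-μ))/2 := by
    rw [Real.cosh_eq, ← Real.exp_mul, ← Real.exp_mul,
      show t * μ = μ*t by ring, show t * -μ = -(μ*t) by ring]
  simp only [smul_eq_mul]
  rw [abs_of_pos het, h1, h2]
  field_simp

lemma besselK_half {μ x : ℝ} (hμ0 : 0 < μ) (hμ1 : μ < 1) (hx : 0 < x) :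
    besselK μ x = ∫ u in Ioi (0:ℝ), Real.exp (-(x*(u+u⁻¹)/2)) * u ^ (μ-1) / 2 := by
  have hmeas1 : Measurable (fun u : ℝ => Real.exp (-(x*(u+u⁻¹)/2)) * u ^ (μ-1) / 2) := by
    fun_prop
  have hmeas2 : Measurable (fun u : ℝ => Real.exp (-(x*(u+u⁻¹)/2)) * u ^ (-μ-1) / 2) := by
    fun_prop
  -- integrabilities
  have expbound : ∀ r : ℝ, r ≤ 0 → ∀ u : ℝ, 1 < u →
      |Real.exp (-(x*(u+u⁻¹)/2)) * u ^ r / 2| ≤ Real.exp (-(x/2) * u) := by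
    intro r hr u hu
    have hu0 : (0:ℝ) < u := lt_trans one_pos hu
    have e1 : Real.exp (-(x*(u+u⁻¹)/2)) ≤ Real.exp (-(x/2) * u) := by
      apply Real.exp_le_exp.mpr
      have : 0 ≤ x * u⁻¹ := by positivity
      nlinarith
    have e2 : u ^ r ≤ 1 := Real.rpow_le_one_of_one_le_of_nonpos hu.le hr
    have e3 : 0 ≤ u ^ r := Real.rpow_nonneg hu0.le r
    rw [abs_of_nonneg (by positivity)]
    calc Real.exp (-(x*(u+u⁻¹)/2)) * u ^ r / 2 ≤ Real.exp (-(x*(u+u⁻¹)/2)) * 1 / 2 := by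
          apply div_le_div_of_nonneg_right ?_ two_pos.le
          exact mul_le_mul_of_nonneg_left e2 (Real.exp_pos _).le
      _ ≤ Real.exp (-(x/2) * u) := by
          rw [mul_one]
          linarith [e1, (Real.exp_pos (-(x*(u+u⁻¹)/2))).le]
  have int_h1_Ioi : IntegrableOn (fun u : ℝ => Real.exp (-(x*(u+u⁻¹)/2)) * u ^ (μ-1) / 2)
      (Ioi 1) :=
    integrableOn_of_bound measurableSet_Ioi (exp_neg_integrableOn_Ioi 1 (by positivity))
      hmeas1.aestronglyMeasurable.restrict (fun u hu => expbound (μ-1) (by linarith) u hu)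
  have int_h2_Ioi : IntegrableOn (fun u : ℝ => Real.exp (-(x*(u+u⁻¹)/2)) * u ^ (-μ-1) / 2)
      (Ioi 1) :=
    integrableOn_of_bound measurableSet_Ioi (exp_neg_integrableOn_Ioi 1 (by positivity))
      hmeas2.aestronglyMeasurable.restrict (fun u hu => expbound (-μ-1) (by linarith) u hu)
  have int_h1_Ioc : IntegrableOn (fun u : ℝ => Real.exp (-(x*(u+u⁻¹)/2)) * u ^ (μ-1) / 2)
      (Ioc 0 1) := by
    refine integrableOn_of_bound measurableSet_Ioc (int_Ioc_rpow (r := μ-1) (by linarith))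
      hmeas1.aestronglyMeasurable.restrict (fun u hu => ?_)
    obtain ⟨hu0, hu1⟩ := hu
    have e1 : Real.exp (-(x*(u+u⁻¹)/2)) ≤ 1 := Real.exp_le_one_iff.mpr (neg_nonpos.mpr (by positivity))
    have e3 : 0 ≤ u ^ (μ-1) := Real.rpow_nonneg hu0.le _
    rw [abs_of_nonneg (by positivity)]
    calc Real.exp (-(x*(u+u⁻¹)/2)) * u ^ (μ-1) / 2 ≤ 1 * u ^ (μ-1) / 2 := by
          apply div_le_div_of_nonneg_right ?_ two_pos.le
          exact mul_le_mul_of_nonneg_right e1 e3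
      _ ≤ u ^ (μ-1) := by linarith
  -- besselK as integral over Ioi 1 of h1 + h2
  have split : besselK μ x = (∫ u in Ioi (1:ℝ), Real.exp (-(x*(u+u⁻¹)/2)) * u ^ (μ-1) / 2)
      + ∫ u in Ioi (1:ℝ), Real.exp (-(x*(u+u⁻¹)/2)) * u ^ (-μ-1) / 2 := by
    rw [besselK_u hx, ← integral_add int_h1_Ioi int_h2_Ioi]
    apply setIntegral_congr_fun measurableSet_Ioi
    intro u hu
    have hu0 : (0:ℝ) < u := lt_trans one_pos hu
    have l1 : u ^ μ * u⁻¹ = u ^ (μ-1) := by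
      rw [← Real.rpow_neg_one u, ← Real.rpow_add hu0, show μ + -1 = μ-1 by ring]
    have l2 : u ^ (-μ) * u⁻¹ = u ^ (-μ-1) := by
      rw [← Real.rpow_neg_one u, ← Real.rpow_add hu0, show -μ + -1 = -μ-1 by ring]
    simp only
    rw [← l1, ← l2]
    field_simp
  -- inversion: ∫_{Ici 1} h2 = ∫_{Ioc 0 1} h1
  have inv_step : (∫ u in Ioi (1:ℝ), Real.exp (-(x*(u+u⁻¹)/2)) * u ^ (-μ-1) / 2)
      = ∫ u in Ioc (0:ℝ) 1, Real.exp (-(x*(u+u⁻¹)/2)) * u ^ (μ-1) / 2 := by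
    rw [← integral_Ici_eq_integral_Ioi]
    have key := integral_image_eq_integral_abs_deriv_smul measurableSet_Ioc
      (fun u (hu : u ∈ Ioc (0:ℝ) 1) => (hasDerivAt_inv (ne_of_gt hu.1)).hasDerivWithinAt)
      (inv_injective.injOn)
      (fun u : ℝ => Real.exp (-(x*(u+u⁻¹)/2)) * u ^ (-μ-1) / 2)
    rw [_root_.image_inv_Ioc] at key
    rw [key]
    apply setIntegral_congr_fun measurableSet_Ioc
    intro u hu
    obtain ⟨hu0, hu1⟩ := hu
    have l1 : (u⁻¹) ^ (-μ-1) = u ^ (μ+1) := by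
      rw [Real.inv_rpow hu0.le, ← Real.rpow_neg hu0.le, show -(-μ-1) = μ+1 by ring]
    have l2 : |(-(u^2)⁻¹ : ℝ)| = (u^2)⁻¹ := by
      rw [abs_neg, abs_of_pos (by positivity)]
    have l3 : ((u:ℝ)^2)⁻¹ * u ^ (μ+1) = u ^ (μ-1) := by
      have l4 : ((u:ℝ)^2)⁻¹ = u ^ (-2 : ℝ) := by
        rw [← Real.rpow_natCast u 2, ← Real.rpow_neg hu0.le]
        norm_num
      rw [l4, ← Real.rpow_add hu0, show (-2 : ℝ) + (μ+1) = μ-1 by ring]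
    simp only [smul_eq_mul]
    rw [l2, inv_inv, l1, show u⁻¹ + u = u + u⁻¹ by ring]
    calc (u^2)⁻¹ * (Real.exp (-(x*(u+u⁻¹)/2)) * u ^ (μ+1) / 2)
        = ((u^2)⁻¹ * u ^ (μ+1)) * Real.exp (-(x*(u+u⁻¹)/2)) / 2 := by ring
      _ = Real.exp (-(x*(u+u⁻¹)/2)) * u ^ (μ-1) / 2 := by rw [l3]; ring
  rw [split, inv_step]
  rw [← Ioc_union_Ioi_eq_Ioi (zero_le_one (α := ℝ)),
    setIntegral_union (Ioc_disjoint_Ioi le_rfl) measurableSet_Ioi int_h1_Ioc int_h1_Ioi]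
  ring

lemma besselK_scale {μ x : ℝ} (hμ0 : 0 < μ) (hμ1 : μ < 1) (hx : 0 < x) :
    besselK μ x = (2/x) ^ μ / 2 *
      ∫ s in Ioi (0:ℝ), Real.exp (-s) * s ^ (μ-1) * Real.exp (-(x^2/4/s)) := by
  rw [besselK_half hμ0 hμ1 hx]
  have h2x : (0:ℝ) < 2/x := by positivity
  have key := integral_comp_mul_left_Ioi
    (fun u : ℝ => Real.exp (-(x*(u+u⁻¹)/2)) * u ^ (μ-1) / 2) 0 h2x
  rw [mul_zero, smul_eq_mul] at key
  have e1 : EqOn (fun s : ℝ => Real.exp (-(x*((2/x*s)+(2/x*s)⁻¹)/2)) * (2/x*s) ^ (μ-1) / 2)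
      (fun s : ℝ => (2/x)^(μ-1)/2 * (Real.exp (-s) * s^(μ-1) * Real.exp (-(x^2/4/s))))
      (Ioi 0) := by
    intro s hs
    have hs0 : (0:ℝ) < s := hs
    have a1 : -(x*((2/x*s)+(2/x*s)⁻¹)/2) = -s + -(x^2/4/s) := by
      field_simp
      ring
    have a2 : ((2/x)*s) ^ (μ-1) = (2/x)^(μ-1) * s^(μ-1) := Real.mul_rpow h2x.le hs0.le
    simp only
    rw [a1, a2, Real.exp_add]
    ring
  have key2 : (∫ u in Ioi (0:ℝ), Real.exp (-(x*(u+u⁻¹)/2)) * u ^ (μ-1) / 2)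
      = (2/x) * ∫ s in Ioi (0:ℝ),
          (2/x)^(μ-1)/2 * (Real.exp (-s) * s^(μ-1) * Real.exp (-(x^2/4/s))) := by
    rw [← setIntegral_congr_fun measurableSet_Ioi e1, key]
    field_simp
    ring
  rw [key2, integral_const_mul]
  have c1 : (2/x)^μ = (2/x) * (2/x)^(μ-1) := by
    have := Real.rpow_add h2x 1 (μ-1)
    rw [show (1:ℝ)+(μ-1) = μ by ring, Real.rpow_one] at this
    exact this
  rw [c1]
  ring

lemma rho_eq {μ x : ℝ} (hμ0 : 0 < μ) (hμ1 : μ < 1) (hx : 0 < x) :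
    2^(1-μ)/Real.Gamma μ * x^μ * besselK μ x
      = (∫ s in Ioi (0:ℝ), Real.exp (-s) * s^(μ-1) * Real.exp (-(x^2/4/s))) / Real.Gamma μ := by
  rw [besselK_scale hμ0 hμ1 hx]
  have hG : (0:ℝ) < Real.Gamma μ := Real.Gamma_pos_of_pos hμ0
  have c1 : x^μ * (2/x)^μ = 2^μ := by
    rw [← Real.mul_rpow hx.le (by positivity), show x*(2/x) = 2 by field_simp]
  have c2 : (2:ℝ)^(1-μ) * 2^μ = 2 := by
    rw [← Real.rpow_add two_pos, show (1:ℝ)-μ+μ = 1 by ring, Real.rpow_one]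
  set I := ∫ s in Ioi (0:ℝ), Real.exp (-s) * s^(μ-1) * Real.exp (-(x^2/4/s))
  calc 2^(1-μ)/Real.Gamma μ * x^μ * ((2/x)^μ/2 * I)
      = (2^(1-μ) * (x^μ * (2/x)^μ)) / (2 * Real.Gamma μ) * I := by ring
    _ = (2:ℝ) / (2 * Real.Gamma μ) * I := by rw [c1, c2]
    _ = I / Real.Gamma μ := by
        field_simp

theorem stmt_13 (lam ν : ℝ) (hlam : 0 < lam) (hν₁ : 1 / 2 < ν) (hν₂ : ν < 3 / 2) :
    ∃ M δ : ℝ, 0 < M ∧ 0 < δ ∧ ∀ Δ : ℝ, 0 < Δ → Δ < δ →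
      |(2 * ((2 * lam) ^ (1 - 2 * ν) * Real.Gamma (2 * ν - 1)) *
            (1 - 2 ^ (3 / 2 - ν) / Real.Gamma (ν - 1 / 2) *
              |lam * Δ| ^ (ν - 1 / 2) * besselK (ν - 1 / 2) |lam * Δ|)) /
          (2 * ((2 * lam) ^ (1 - 2 * ν) * Real.Gamma (2 * ν - 1))) -
        2 ^ (1 - 2 * ν) * (Real.Gamma (3 / 2 - ν) / Real.Gamma (ν + 1 / 2)) *
          (lam * Δ) ^ (2 * ν - 1)| ≤ M * Δ ^ 2 := by
  have hμ0 : (0:ℝ) < ν - 1/2 := by linarith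
  have hμ1 : ν - 1/2 < 1 := by linarith
  have hG : (0:ℝ) < Real.Gamma (ν - 1/2) := Real.Gamma_pos_of_pos hμ0
  refine ⟨(1/(ν-1/2) + 1/(1-(ν-1/2))) * lam^2 / (4 * Real.Gamma (ν-1/2)), 1, ?_, one_pos, ?_⟩
  · have h1 : (0:ℝ) < 1/(ν-1/2) := by positivity
    have h2 : (0:ℝ) < 1/(1-(ν-1/2)) := by
      apply div_pos one_pos
      linarith
    positivity
  intro Δ hΔ0 hΔ1
  have hx : (0:ℝ) < lam * Δ := mul_pos hlam hΔ0
  have habs : |lam * Δ| = lam * Δ := abs_of_pos hx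
  rw [habs]
  have hAne : (2 * ((2*lam)^(1-2*ν) * Real.Gamma (2*ν-1))) ≠ 0 := by
    have h1 : (0:ℝ) < (2*lam)^(1-2*ν) := Real.rpow_pos_of_pos (by linarith) _
    have h2 : (0:ℝ) < Real.Gamma (2*ν-1) := Real.Gamma_pos_of_pos (by linarith)
    positivity
  rw [mul_div_cancel_left₀ _ hAne]
  rw [show (3:ℝ) / 2 - ν = 1 - (ν - 1/2) by ring]
  rw [rho_eq hμ0 hμ1 hx]
  set m : ℝ := ν - 1/2 with hm
  set I : ℝ := ∫ s in Ioi (0:ℝ), Real.exp (-s) * s^(m-1) * Real.exp (-((lam*Δ)^2/4/s)) with hI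
  set y : ℝ := (lam*Δ)^2/4 with hy
  have hy0 : 0 < y := by positivity
  -- rewrite the target power term
  have r1 : Real.Gamma (ν+1/2) = m * Real.Gamma m := by
    rw [show ν + 1/2 = m + 1 by rw [hm]; ring]
    exact Real.Gamma_add_one (ne_of_gt hμ0)
  have r2 : Real.Gamma (1-m) = -m * Real.Gamma (-m) := by
    rw [show (1:ℝ) - m = -m + 1 by ring]
    exact Real.Gamma_add_one (neg_ne_zero.mpr (ne_of_gt hμ0))
  have r3 : y ^ m = 2^(1-2*ν) * (lam*Δ)^(2*ν-1) := by
    rw [hy, Real.div_rpow (sq_nonneg _) (by norm_num)]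
    rw [← Real.rpow_natCast (lam*Δ) 2, ← Real.rpow_mul hx.le]
    rw [show ((2:ℕ):ℝ) * m = 2*ν-1 by rw [hm]; push_cast; ring]
    rw [show (4:ℝ) = 2^((2:ℕ):ℝ) by rw [Real.rpow_natCast]; norm_num]
    rw [← Real.rpow_mul (by norm_num : (0:ℝ) ≤ 2)]
    rw [div_eq_mul_inv, ← Real.rpow_neg (by norm_num : (0:ℝ) ≤ 2)]
    rw [show -(((2:ℕ):ℝ) * m) = 1-2*ν by rw [hm]; push_cast; ring]
    ring
  have hBx : (2:ℝ)^(1-2*ν) * (Real.Gamma (1-m) / Real.Gamma (ν+1/2)) * (lam*Δ)^(2*ν-1)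
      = -(Real.Gamma (-m) * y ^ m) / Real.Gamma m := by
    rw [r1, r2, r3]
    field_simp
  rw [hBx]
  have key := core_est (μ := m) (y := y) hμ0 hμ1 hy0
  have hI' : (∫ s in Ioi (0:ℝ), Real.exp (-s) * s ^ (m-1) * Real.exp (-(y/s))) = I := by
    rw [hI, hy]
  rw [hI'] at key
  have expr_eq : 1 - I / Real.Gamma m - -(Real.Gamma (-m) * y ^ m) / Real.Gamma m
      = -((I - Real.Gamma m - Real.Gamma (-m) * y ^ m) / Real.Gamma m) := by
    field_simp
    ring
  rw [expr_eq, abs_neg, abs_div, abs_of_pos hG]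
  calc |I - Real.Gamma m - Real.Gamma (-m) * y ^ m| / Real.Gamma m
      ≤ (1/m + 1/(1-m)) * y / Real.Gamma m := by gcongr
    _ = (1/m + 1/(1-m)) * lam^2 / (4 * Real.Gamma m) * Δ^2 := by
        rw [hy]
        field_simp

end helpers
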